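/- Let n(t) ∈ ℝ₊^{Ω} solve the linear ODE dn/dt = A n, set N_α(t) = Σ_{j∈α} n_j(t), and let (S_α, J_α) be the associated fluxes S_α(t) = Σ_{β∈X∖{α}} A_{αβ} n_β(t), (J_α(t))_i = (n_α(t))_i Σ_{β∈X∖{α}} (e_β^⊤ A_{βα})_i, with kernels G_{βα}(t) = A_{αβ} exp(t A_{ββ}), (K_α(t))_{ij} = Σ_{β∈X∖{α}} (e_β^⊤ A_{βα})_i (exp(t A_{αα}))_{ij} and forcing functions S_α⁰(t) = Σ_{β≠α} G_{βα}(t) n_β⁰, J_α⁰(t) = K_α(t) n_α⁰. Assume each compartment α ∈ X has at most one entrance point, denoted i_α if it exists. Then: (i) for all α ∈ X, (S_α⁰(t))_j = (S_α(t))_j = 0 for all j ≠ i_α; (ii) the scalar functions B_α := (S_α)_{i_α} (set B_α := 0 if i_α does not exist) and D_α := e_α^⊤ J_α satisfy the classical RFE flux equations B_α(t) = B_α⁰(t) + Σ_{β≠α} ∫₀ᵗ B_β(s) Φ_{βα}(t−s) ds and D_α(t) = D_α⁰(t) + ∫₀ᵗ k_α(t−s) B_α(s) ds, with k_α := Σ_{j∈α}(K_α)_{j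 i_α} and Φ_{βα} := (G_{βα})_{i_α i_β} when the relevant entrance points exist (and zero otherwise), B_α⁰ := (S_α⁰)_{i_α} (zero if i_α does not exist), D_α⁰ := e_α^⊤ J_α⁰; (iii) (d/dt)N_α(t) = B_α(t) − D_α(t). -/

import Mathlib

open MeasureTheory Matrix NormedSpace
open scoped Classical

variable {Ω X : Type*}

/-- The block `A_{αβ}` of a matrix `A : ℝ^{Ω×Ω}` with respect to the partition of `Ω`
into the fibers of `π : Ω → X`. -/
def blockM [DecidableEq X] (A : Matrix Ω Ω ℝ) (π : Ω → X) (α β : X) :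
    Matrix {i : Ω // π i = α} {j : Ω // π j = β} ℝ :=
  fun i j => A i.1 j.1

/-- A state `i` is an entrance point of its compartment `π i` if some state of another
compartment jumps to `i` with positive rate (`λ_{ji} = A_{ij} > 0`). -/
def IsEntrance (A : Matrix Ω Ω ℝ) (π : Ω → X) (i : Ω) : Prop :=
  ∃ j, π j ≠ π i ∧ 0 < A i j

section AuxExp
variable {m : Type*} [Fintype m] [DecidableEq m]

lemma expEntry_hasDerivAt (M : Matrix m m ℝ) (t : ℝ) (i j : m) :
    HasDerivAt (fun u : ℝ => exp (u • M) i j) ((M * exp (t • M)) i j) t := by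
  letI : SeminormedRing (Matrix m m ℝ) := Matrix.linftyOpSemiNormedRing
  letI : NormedRing (Matrix m m ℝ) := Matrix.linftyOpNormedRing
  letI : NormedAlgebra ℝ (Matrix m m ℝ) := Matrix.linftyOpNormedAlgebra
  exact (LinearMap.toContinuousLinearMap
    (Matrix.entryLinearMap ℝ ℝ i j)).hasFDerivAt.comp_hasDerivAt
    t (hasDerivAt_exp_smul_const' (𝕂 := ℝ) M t)

lemma expEntry_continuous (M : Matrix m m ℝ) (i j : m) :
    Continuous fun s : ℝ => exp (s • M) i j :=
  continuous_iff_continuousAt.2 fun s => (expEntry_hasDerivAt M s i j).continuousAt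

lemma contExpEntry (M : Matrix m m ℝ) (t : ℝ) (i j : m) :
    Continuous fun s : ℝ => exp ((t - s) • M) i j :=
  (expEntry_continuous M i j).comp (continuous_const.sub continuous_id)

lemma expAdd (M : Matrix m m ℝ) (a b : ℝ) :
    exp (a • M) * exp (b • M) = exp ((a + b) • M) := by
  rw [add_smul, Matrix.exp_add_of_commute]
  exact ((Commute.refl M).smul_left a).smul_right b

lemma expZero (M : Matrix m m ℝ) : exp ((0:ℝ) • M) = 1 := by
  rw [zero_smul, NormedSpace.exp_zero]

lemma expM_comm (M : Matrix m m ℝ) (a : ℝ) :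
    M * exp (a • M) = exp (a • M) * M := by
  letI : SeminormedRing (Matrix m m ℝ) := Matrix.linftyOpSemiNormedRing
  letI : NormedRing (Matrix m m ℝ) := Matrix.linftyOpNormedRing
  letI : NormedAlgebra ℝ (Matrix m m ℝ) := Matrix.linftyOpNormedAlgebra
  exact (((Commute.refl M).smul_right a).exp_right).eq

lemma duhamel (M : Matrix m m ℝ) (v f : ℝ → m → ℝ)
    (hv : ∀ i s, HasDerivAt (fun u => v u i) (M.mulVec (v s) i + f s i) s)
    (hf : ∀ i, Continuous fun s => f s i) (t : ℝ) (i : m) :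
    v t i = (exp (t • M)).mulVec (v 0) i
      + ∫ s in (0:ℝ)..t, (exp ((t - s) • M)).mulVec (f s) i := by
  set w : ℝ → m → ℝ := fun s => (exp ((-s) • M)).mulVec (v s) with hw_def
  have hvc : ∀ j, Continuous fun s => v s j := fun j =>
    continuous_iff_continuousAt.2 fun s => (hv j s).differentiableAt.continuousAt
  have hw : ∀ j s, HasDerivAt (fun u => w u j)
      ((exp ((-s) • M)).mulVec (f s) j) s := by
    intro j s
    have key : ∀ k : m, HasDerivAt (fun u => exp ((-u) • M) j k * v u k)
        (-((M * exp ((-s) • M)) j k) * v s k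
          + exp ((-s) • M) j k * (M.mulVec (v s) k + f s k)) s := by
      intro k
      have h1 : HasDerivAt (fun u : ℝ => exp ((-u) • M) j k)
          ((M * exp ((-s) • M)) j k * (-1)) s :=
        (expEntry_hasDerivAt M (-s) j k).comp s (hasDerivAt_neg s)
      have h1' : HasDerivAt (fun u : ℝ => exp ((-u) • M) j k)
          (-((M * exp ((-s) • M)) j k)) s := by simpa using h1
      exact h1'.mul (hv k s)
    have hsum := HasDerivAt.fun_sum (fun k (_ : k ∈ Finset.univ) => key k)
    have heq : (fun u => ∑ k, exp ((-u) • M) j k * v u k) = fun u => w u j := by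
      funext u; simp [hw_def, Matrix.mulVec, dotProduct]
    rw [heq] at hsum
    refine hsum.congr_deriv ?_
    symm
    have hswap : (exp ((-s) • M)).mulVec (M.mulVec (v s)) j
        = (M * exp ((-s) • M)).mulVec (v s) j := by
      rw [Matrix.mulVec_mulVec, ← expM_comm]
    have expand : ∀ (N : Matrix m m ℝ) (x : m → ℝ), N.mulVec x j = ∑ k, N j k * x k := by
      intro N x; simp [Matrix.mulVec, dotProduct]
    simp only [expand] at hswap ⊢
    rw [Finset.sum_congr rfl (fun k _ => by ring :
      ∀ k ∈ Finset.univ, -((M * exp ((-s) • M)) j k) * v s k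
        + exp ((-s) • M) j k * (M.mulVec (v s) k + f s k)
        = exp ((-s) • M) j k * f s k
          + (exp ((-s) • M) j k * (M.mulVec (v s) k) - (M * exp ((-s) • M)) j k * v s k))]
    rw [Finset.sum_add_distrib, Finset.sum_sub_distrib]
    have : ∑ k, exp ((-s) • M) j k * M.mulVec (v s) k
        = ∑ k, (M * exp ((-s) • M)) j k * v s k := hswap
    rw [this]; ring
  have hcont : ∀ j, Continuous fun s => (exp ((-s) • M)).mulVec (f s) j := by
    intro j
    have : (fun s => (exp ((-s) • M)).mulVec (f s) j)
        = fun s => ∑ k, exp ((-s) • M) j k * f s k := by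
      funext s; simp [Matrix.mulVec, dotProduct]
    rw [this]
    exact continuous_finset_sum _ fun k _ =>
      ((expEntry_continuous M j k).comp continuous_neg).mul (hf k)
  have hftc : ∀ j, w t j - w 0 j = ∫ s in (0:ℝ)..t, (exp ((-s) • M)).mulVec (f s) j := by
    intro j
    exact (intervalIntegral.integral_eq_sub_of_hasDerivAt (fun s _ => hw j s)
      ((hcont j).intervalIntegrable _ _)).symm
  have hrec : v t i = ∑ j, exp (t • M) i j * w t j := by
    have : (exp (t • M)).mulVec (w t) = v t := by
      rw [hw_def, Matrix.mulVec_mulVec, expAdd, add_neg_cancel, expZero, Matrix.one_mulVec]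
    rw [← this]; simp [Matrix.mulVec, dotProduct]
  have hw0 : w 0 = v 0 := by rw [hw_def]; simp [expZero, Matrix.one_mulVec]
  calc v t i = ∑ j, exp (t • M) i j * w t j := hrec
    _ = ∑ j, exp (t • M) i j * (v 0 j + ∫ s in (0:ℝ)..t, (exp ((-s) • M)).mulVec (f s) j) := by
        refine Finset.sum_congr rfl fun j _ => ?_
        rw [← hw0, ← hftc j]; ring_nf
    _ = (exp (t • M)).mulVec (v 0) i
        + ∫ s in (0:ℝ)..t, (exp ((t - s) • M)).mulVec (f s) i := by
        simp only [mul_add, Finset.sum_add_distrib]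
        have hA : ∑ j, exp (t • M) i j * v 0 j = (exp (t • M)).mulVec (v 0) i := rfl
        have hB : (∑ j, exp (t • M) i j *
            ∫ s in (0:ℝ)..t, (exp ((-s) • M)).mulVec (f s) j)
            = ∫ s in (0:ℝ)..t, (exp ((t - s) • M)).mulVec (f s) i := by
          rw [Finset.sum_congr rfl fun j _ => (intervalIntegral.integral_const_mul _ _).symm,
            ← intervalIntegral.integral_finset_sum
              (f := fun j s => exp (t • M) i j * (exp ((-s) • M)).mulVec (f s) j)
              (fun j _ => (continuous_const.mul (hcont j)).intervalIntegrable _ _)]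
          refine intervalIntegral.integral_congr fun s _ => ?_
          have h2 : ∑ j, exp (t • M) i j * (exp ((-s) • M)).mulVec (f s) j
              = ((exp (t • M)) * (exp ((-s) • M))).mulVec (f s) i := by
            rw [← Matrix.mulVec_mulVec]; rfl
          rw [h2, expAdd, ← sub_eq_add_neg]
        rw [hA, hB]

lemma subsingleton_sum_mul {γ : Type*} (F : Finset γ)
    (hF : ∀ a ∈ F, ∀ b ∈ F, a = b) (f g : γ → ℝ) :
    (∑ a ∈ F, f a) * (∑ a ∈ F, g a) = ∑ a ∈ F, f a * g a := by
  rcases F.eq_empty_or_nonempty with h | ⟨a, ha⟩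
  · simp [h]
  · have : F = {a} := Finset.eq_singleton_iff_unique_mem.mpr ⟨ha, fun b hb => hF b hb a ha⟩
    simp [this]

end AuxExp

/-- **Reduction to the classical (scalar) RFE system for compartments with at most one
entrance point.** If every compartment has at most one entrance point `i_α`, then:
(i) the vector fluxes `S_α⁰, S_α` vanish on all non-entrance components;
(ii) the scalar fluxes `B_α = (S_α)_{i_α}` (zero if no entrance point) and `D_α = e_α^⊤ J_α`
satisfy the classical RFE flux equations with kernels `k_α = ∑_{j∈α}(K_α)_{j i_α}`,
`Φ_{βα} = (G_{βα})_{i_α i_β}` and forcing functions `B_α⁰ = (S_α⁰)_{i_α}`,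
`D_α⁰ = e_α^⊤ J_α⁰` (all set to zero when the relevant entrance points do not exist;
here encoded as sums over the — at most one — entrance points);
(iii) `dN_α/dt = B_α − D_α`. -/
theorem ode_to_classicalRFE_one_entrance [Fintype Ω] [DecidableEq Ω] [Fintype X] [DecidableEq X]
    (A : Matrix Ω Ω ℝ) (π : Ω → X)
    (hoffdiag : ∀ i j, i ≠ j → 0 ≤ A i j)
    (hcolsum : ∀ j, ∑ i, A i j = 0)
    -- each compartment has at most one entrance point
    (hone : ∀ i i', π i = π i' → IsEntrance A π i → IsEntrance A π i' → i = i')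
    (n : ℝ → Ω → ℝ) (n0 : Ω → ℝ)
    (hODE : ∀ i t, HasDerivAt (fun s => n s i) (A.mulVec (n t) i) t)
    (hinit : n 0 = n0)
    (hnonneg : ∀ t, 0 ≤ t → ∀ i, 0 ≤ n t i)
    (N : X → ℝ → ℝ) (hN : ∀ α t, N α t = ∑ i : {i : Ω // π i = α}, n t i.1)
    -- the vector fluxes, kernels and forcing functions associated to the ODE
    (S J : (α : X) → ℝ → {i : Ω // π i = α} → ℝ)
    (hS : ∀ α t, S α t = ∑ β ∈ Finset.univ.erase α,
        (blockM A π α β).mulVec (fun j => n t j.1))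
    (hJ : ∀ α t i, J α t i = n t i.1 *
        ∑ β ∈ Finset.univ.erase α, ∑ k : {k : Ω // π k = β}, A k.1 i.1)
    (G : (β α : X) → ℝ → Matrix {i : Ω // π i = α} {j : Ω // π j = β} ℝ)
    (hG : ∀ β α t, G β α t = blockM A π α β * exp (t • blockM A π β β))
    (K : (α : X) → ℝ → Matrix {i : Ω // π i = α} {i : Ω // π i = α} ℝ)
    (hK : ∀ α t i j, K α t i j = ∑ β ∈ Finset.univ.erase α,
        (∑ k : {k : Ω // π k = β}, A k.1 i.1) * exp (t • blockM A π α α) i j)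
    (S0 J0 : (α : X) → ℝ → {i : Ω // π i = α} → ℝ)
    (hS0 : ∀ α t, S0 α t = ∑ β ∈ Finset.univ.erase α,
        (G β α t).mulVec (fun j => n0 j.1))
    (hJ0 : ∀ α t, J0 α t = (K α t).mulVec (fun i => n0 i.1))
    -- the scalar fluxes, kernels and forcing functions
    (B D B0 D0 : X → ℝ → ℝ) (k : X → ℝ → ℝ) (Φ : X → X → ℝ → ℝ)
    (hB : ∀ α t, B α t = ∑ i ∈ Finset.univ.filter
        (fun i : {i : Ω // π i = α} => IsEntrance A π i.1), S α t i)
    (hD : ∀ α t, D α t = ∑ i, J α t i)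
    (hB0 : ∀ α t, B0 α t = ∑ i ∈ Finset.univ.filter
        (fun i : {i : Ω // π i = α} => IsEntrance A π i.1), S0 α t i)
    (hD0 : ∀ α t, D0 α t = ∑ i, J0 α t i)
    (hk : ∀ α t, k α t = ∑ i ∈ Finset.univ.filter
        (fun i : {i : Ω // π i = α} => IsEntrance A π i.1), ∑ j, K α t j i)
    (hΦ : ∀ β α t, Φ β α t =
        ∑ i ∈ Finset.univ.filter (fun i : {i : Ω // π i = α} => IsEntrance A π i.1),
          ∑ j ∈ Finset.univ.filter (fun j : {j : Ω // π j = β} => IsEntrance A π j.1),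
            G β α t i j) :
    -- (i) the fluxes vanish on non-entrance components
    (∀ α t (j : {j : Ω // π j = α}), ¬ IsEntrance A π j.1 → S0 α t j = 0 ∧ S α t j = 0) ∧
    -- (ii) the classical RFE flux equations
    (∀ α t, 0 ≤ t → B α t = B0 α t + ∑ β ∈ Finset.univ.erase α,
        ∫ s in (0:ℝ)..t, B β s * Φ β α (t - s)) ∧
    (∀ α t, 0 ≤ t → D α t = D0 α t + ∫ s in (0:ℝ)..t, k α (t - s) * B α s) ∧
    -- (iii) the evolution of the compartment concentrations
    (∀ α t, HasDerivAt (N α) (B α t - D α t) t) := by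
  -- rates into a non-entrance state from outside vanish
  have hAzero : ∀ j kk : Ω, π kk ≠ π j → ¬ IsEntrance A π j → A j kk = 0 := by
    intro j kk hπ hj
    have hjk : j ≠ kk := fun h => hπ (by rw [h])
    refine le_antisymm ?_ (hoffdiag j kk hjk)
    by_contra h
    exact hj ⟨kk, hπ, lt_of_not_ge h⟩
  -- (i) for S
  have hSzero : ∀ α t (j : {j : Ω // π j = α}), ¬ IsEntrance A π j.1 → S α t j = 0 := by
    intro α t j hj
    rw [hS, Finset.sum_apply]
    refine Finset.sum_eq_zero fun β hβ => ?_
    show ∑ kk : {kk : Ω // π kk = β}, blockM A π α β j kk * n t kk.1 = 0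
    refine Finset.sum_eq_zero fun kk _ => ?_
    rw [show blockM A π α β j kk = A j.1 kk.1 from rfl,
      hAzero j.1 kk.1 (by rw [kk.2, j.2]; exact Finset.ne_of_mem_erase hβ) hj, zero_mul]
  -- rows of G at non-entrance points vanish
  have hGrow : ∀ (β α : X), β ≠ α → ∀ t (j : {j : Ω // π j = α}), ¬ IsEntrance A π j.1 →
      ∀ mm, G β α t j mm = 0 := by
    intro β α hβα t j hj mm
    rw [hG, Matrix.mul_apply]
    refine Finset.sum_eq_zero fun kk _ => ?_
    rw [show blockM A π α β j kk = A j.1 kk.1 from rfl,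
      hAzero j.1 kk.1 (by rw [kk.2, j.2]; exact hβα) hj, zero_mul]
  -- (i) for S0
  have hS0zero : ∀ α t (j : {j : Ω // π j = α}), ¬ IsEntrance A π j.1 → S0 α t j = 0 := by
    intro α t j hj
    rw [hS0, Finset.sum_apply]
    refine Finset.sum_eq_zero fun β hβ => ?_
    show ∑ mm : {mm : Ω // π mm = β}, G β α t j mm * n0 mm.1 = 0
    refine Finset.sum_eq_zero fun mm _ => ?_
    rw [hGrow β α (Finset.ne_of_mem_erase hβ) t j hj mm, zero_mul]
  -- continuity of n
  have hn_cont : ∀ i, Continuous fun s => n s i := fun i =>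
    continuous_iff_continuousAt.2 fun s => (hODE i s).differentiableAt.continuousAt
  -- continuity of S
  have contS : ∀ β (j : {j : Ω // π j = β}), Continuous fun s => S β s j := by
    intro β j
    have he : (fun s => S β s j) = fun s => ∑ γ ∈ Finset.univ.erase β,
        ∑ kk : {kk : Ω // π kk = γ}, A j.1 kk.1 * n s kk.1 := by
      funext s; rw [hS, Finset.sum_apply]; rfl
    rw [he]
    exact continuous_finset_sum _ fun γ _ => continuous_finset_sum _ fun kk _ =>
      continuous_const.mul (hn_cont kk.1)
  -- the block decomposition of the ODE
  have decomp : ∀ β (j : {j : Ω // π j = β}) (s : ℝ),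
      A.mulVec (n s) j.1 = (blockM A π β β).mulVec (fun kk => n s kk.1) j + S β s j := by
    intro β j s
    rw [hS, Finset.sum_apply]
    have h1 : A.mulVec (n s) j.1 = ∑ kk, A j.1 kk * n s kk := rfl
    rw [h1, ← Fintype.sum_fiberwise π (fun kk => A j.1 kk * n s kk),
      ← Finset.add_sum_erase Finset.univ _ (Finset.mem_univ β)]
    rfl
  have key_ode : ∀ β (j : {j : Ω // π j = β}) (s : ℝ),
      HasDerivAt (fun u => n u j.1)
        ((blockM A π β β).mulVec (fun kk => n s kk.1) j + S β s j) s := by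
    intro β j s
    have h := hODE j.1 s
    rwa [decomp β j s] at h
  -- Duhamel formula per compartment
  have duh : ∀ β (j : {j : Ω // π j = β}) (t : ℝ),
      n t j.1 = (exp (t • blockM A π β β)).mulVec (fun kk => n0 kk.1) j
        + ∫ s in (0:ℝ)..t, (exp ((t - s) • blockM A π β β)).mulVec (S β s) j := by
    intro β j t
    have h := duhamel (blockM A π β β) (fun s kk => n s kk.1) (fun s => S β s)
      (fun kk s => key_ode β kk s) (fun kk => contS β kk) t j
    rw [hinit] at h
    exact h
  -- continuity of the Duhamel integrands
  have contInner : ∀ β (t : ℝ) (j : {j : Ω // π j = β}),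
      Continuous fun s => (exp ((t - s) • blockM A π β β)).mulVec (S β s) j := by
    intro β t j
    have he : (fun s => (exp ((t - s) • blockM A π β β)).mulVec (S β s) j)
        = fun s => ∑ kk, exp ((t - s) • blockM A π β β) j kk * S β s kk := by
      funext s; rfl
    rw [he]
    exact continuous_finset_sum _ fun kk _ => (contExpEntry _ t j kk).mul (contS β kk)
  have contG : ∀ (β α : X) (t : ℝ) (i : {i : Ω // π i = α}),
      Continuous fun s => (G β α (t - s)).mulVec (S β s) i := by
    intro β α t i
    have he : (fun s => (G β α (t - s)).mulVec (S β s) i)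
        = fun s => ∑ j : {j : Ω // π j = β},
            (∑ kk : {kk : Ω // π kk = β},
              blockM A π α β i kk * exp ((t - s) • blockM A π β β) kk j) * S β s j := by
      funext s
      rw [hG]
      show ∑ j, (blockM A π α β * exp ((t - s) • blockM A π β β)) i j * S β s j = _
      exact Finset.sum_congr rfl fun j _ => by rw [Matrix.mul_apply]
    rw [he]
    exact continuous_finset_sum _ fun j _ =>
      (continuous_finset_sum _ fun kk _ =>
        continuous_const.mul (contExpEntry _ t kk j)).mul (contS β j)
  -- pointwise renewal for the vector flux S
  have pointS : ∀ α (t : ℝ) (i : {i : Ω // π i = α}), S α t i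
      = S0 α t i + ∑ β ∈ Finset.univ.erase α,
          ∫ s in (0:ℝ)..t, (G β α (t - s)).mulVec (S β s) i := by
    intro α t i
    rw [hS, hS0, Finset.sum_apply, Finset.sum_apply, ← Finset.sum_add_distrib]
    refine Finset.sum_congr rfl fun β hβ => ?_
    have hexp : ((blockM A π α β).mulVec fun j => n t j.1) i
        = ∑ j : {j : Ω // π j = β}, A i.1 j.1 * n t j.1 := rfl
    rw [hexp, Finset.sum_congr rfl fun (j : {j : Ω // π j = β}) _ =>
      (by rw [duh β j t] : A i.1 j.1 * n t j.1 = A i.1 j.1 *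
        ((exp (t • blockM A π β β)).mulVec (fun kk => n0 kk.1) j
          + ∫ s in (0:ℝ)..t, (exp ((t - s) • blockM A π β β)).mulVec (S β s) j))]
    simp only [mul_add]
    rw [Finset.sum_add_distrib]
    congr 1
    · rw [hG, ← Matrix.mulVec_mulVec]
      rfl
    · rw [Finset.sum_congr rfl fun j _ => (intervalIntegral.integral_const_mul _ _).symm,
        ← intervalIntegral.integral_finset_sum
          (f := fun j s => A i.1 j.1 * (exp ((t - s) • blockM A π β β)).mulVec (S β s) j)
          (fun j _ => (continuous_const.mul (contInner β t j)).intervalIntegrable _ _)]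
      refine intervalIntegral.integral_congr fun s _ => ?_
      rw [hG, ← Matrix.mulVec_mulVec]
      rfl
  -- the entrance filter is a subsingleton
  have hsub : ∀ (α : X), ∀ a ∈ Finset.univ.filter
        (fun i : {i : Ω // π i = α} => IsEntrance A π i.1),
      ∀ b ∈ Finset.univ.filter (fun i : {i : Ω // π i = α} => IsEntrance A π i.1), a = b := by
    intro α a ha b hb
    rw [Finset.mem_filter] at ha hb
    exact Subtype.ext (hone a.1 b.1 (by rw [a.2, b.2]) ha.2 hb.2)
  -- summing S over the compartment gives B
  have sumS : ∀ α t, ∑ i : {i : Ω // π i = α}, S α t i = B α t := by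
    intro α t
    rw [hB]
    exact (Finset.sum_filter_of_ne fun i _ hne =>
      by_contra fun hi => hne (hSzero α t i hi)).symm
  -- kernel identity for B
  have kernel_B : ∀ (α β : X), β ≠ α → ∀ u s : ℝ,
      (∑ i ∈ Finset.univ.filter (fun i : {i : Ω // π i = α} => IsEntrance A π i.1),
        (G β α u).mulVec (S β s) i) = B β s * Φ β α u := by
    intro α β hβα u s
    rw [hB, hΦ, Finset.mul_sum]
    refine Finset.sum_congr rfl fun i _ => ?_
    have hL : (G β α u).mulVec (S β s) i = ∑ j ∈ Finset.univ.filter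
        (fun j : {j : Ω // π j = β} => IsEntrance A π j.1), G β α u i j * S β s j := by
      refine (Finset.sum_filter_of_ne fun j _ hne => ?_).symm
      by_contra hj
      exact hne (by rw [hSzero β s j hj, mul_zero])
    rw [hL, subsingleton_sum_mul _ (hsub β) (fun j => S β s j) (fun j => G β α u i j)]
    exact Finset.sum_congr rfl fun j _ => mul_comm _ _
  -- classical renewal equation for B
  have hBeq : ∀ α t, B α t = B0 α t + ∑ β ∈ Finset.univ.erase α,
      ∫ s in (0:ℝ)..t, B β s * Φ β α (t - s) := by
    intro α t
    rw [hB, hB0, Finset.sum_congr rfl fun i _ => pointS α t i, Finset.sum_add_distrib]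
    congr 1
    rw [Finset.sum_comm]
    refine Finset.sum_congr rfl fun β hβ => ?_
    rw [← intervalIntegral.integral_finset_sum
      (fun i _ => (contG β α t i).intervalIntegrable _ _)]
    exact intervalIntegral.integral_congr fun s _ =>
      kernel_B α β (Finset.ne_of_mem_erase hβ) (t - s) s
  -- K entries
  have hKentry : ∀ α (t : ℝ) i j, K α t i j
      = (∑ β ∈ Finset.univ.erase α, ∑ kk : {kk : Ω // π kk = β}, A kk.1 i.1)
        * exp (t • blockM A π α α) i j := by
    intro α t i j
    rw [hK, ← Finset.sum_mul]
  have hJ0i : ∀ α (t : ℝ) i, J0 α t i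
      = (∑ β ∈ Finset.univ.erase α, ∑ kk : {kk : Ω // π kk = β}, A kk.1 i.1)
        * (exp (t • blockM A π α α)).mulVec (fun kk => n0 kk.1) i := by
    intro α t i
    rw [hJ0]
    show ∑ j, K α t i j * n0 j.1 = _
    rw [Finset.sum_congr rfl fun j _ => by rw [hKentry α t i j]]
    have he : (exp (t • blockM A π α α)).mulVec (fun kk : {kk : Ω // π kk = α} => n0 kk.1) i
        = ∑ j, exp (t • blockM A π α α) i j * n0 j.1 := rfl
    rw [he, Finset.mul_sum]
    exact Finset.sum_congr rfl fun j _ => mul_assoc _ _ _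
  -- kernel identity for D
  have kernel_D : ∀ (α : X) (u s : ℝ),
      (∑ i : {i : Ω // π i = α}, (exp (u • blockM A π α α)).mulVec (S α s) i
        * ∑ β ∈ Finset.univ.erase α, ∑ kk : {kk : Ω // π kk = β}, A kk.1 i.1)
      = k α u * B α s := by
    intro α u s
    have h1 : ∀ i : {i : Ω // π i = α},
        (exp (u • blockM A π α α)).mulVec (S α s) i
          * (∑ β ∈ Finset.univ.erase α, ∑ kk : {kk : Ω // π kk = β}, A kk.1 i.1)
        = ∑ j : {j : Ω // π j = α},
            (∑ β ∈ Finset.univ.erase α, ∑ kk : {kk : Ω // π kk = β}, A kk.1 i.1)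
              * exp (u • blockM A π α α) i j * S α s j := by
      intro i
      have he : (exp (u • blockM A π α α)).mulVec (S α s) i
          = ∑ j, exp (u • blockM A π α α) i j * S α s j := rfl
      rw [he, Finset.sum_mul]
      exact Finset.sum_congr rfl fun j _ => by ring
    rw [Finset.sum_congr rfl fun i _ => h1 i, Finset.sum_comm]
    rw [hk, hB, subsingleton_sum_mul _ (hsub α)
      (fun i => ∑ j, K α u j i) (fun i => S α s i)]
    symm
    rw [Finset.sum_congr rfl (fun (a : {i : Ω // π i = α})
      (_ : a ∈ Finset.univ.filter (fun i : {i : Ω // π i = α} => IsEntrance A π i.1)) => by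
        rw [Finset.sum_congr rfl fun (i : {i : Ω // π i = α})
          (_ : i ∈ (Finset.univ : Finset {i : Ω // π i = α})) => hKentry α u i a,
          Finset.sum_mul])]
    refine Finset.sum_filter_of_ne fun j _ hne => ?_
    by_contra hj
    exact hne (Finset.sum_eq_zero fun i _ => by rw [hSzero α s j hj, mul_zero])
  -- classical renewal equation for D
  have hDeq : ∀ α t, D α t = D0 α t + ∫ s in (0:ℝ)..t, k α (t - s) * B α s := by
    intro α t
    rw [hD, hD0]
    rw [Finset.sum_congr rfl fun (i : {i : Ω // π i = α}) _ =>
      (by rw [hJ α t i, duh α i t, add_mul] :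
        J α t i = (exp (t • blockM A π α α)).mulVec (fun kk => n0 kk.1) i
          * (∑ β ∈ Finset.univ.erase α, ∑ kk : {kk : Ω // π kk = β}, A kk.1 i.1)
        + (∫ s in (0:ℝ)..t, (exp ((t - s) • blockM A π α α)).mulVec (S α s) i)
          * ∑ β ∈ Finset.univ.erase α, ∑ kk : {kk : Ω // π kk = β}, A kk.1 i.1)]
    rw [Finset.sum_add_distrib]
    congr 1
    · exact Finset.sum_congr rfl fun i _ => by rw [hJ0i α t i]; ring
    · rw [Finset.sum_congr rfl fun (i : {i : Ω // π i = α}) _ =>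
        (intervalIntegral.integral_mul_const _ _).symm,
        ← intervalIntegral.integral_finset_sum
          (f := fun i s => (exp ((t - s) • blockM A π α α)).mulVec (S α s) i
            * ∑ β ∈ Finset.univ.erase α, ∑ kk : {kk : Ω // π kk = β}, A kk.1 i.1)
          (fun i _ => ((contInner α t i).mul continuous_const).intervalIntegrable _ _)]
      exact intervalIntegral.integral_congr fun s _ => kernel_D α (t - s) s
  -- part (iii)
  have hiii : ∀ α t, HasDerivAt (N α) (B α t - D α t) t := by
    intro α t
    have hNfun : N α = fun u => ∑ i : {i : Ω // π i = α}, n u i.1 := funext fun u => hN α u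
    rw [hNfun]
    have hd := HasDerivAt.fun_sum
      (fun (i : {i : Ω // π i = α}) (_ : i ∈ Finset.univ) => hODE i.1 t)
    refine hd.congr_deriv ?_
    symm
    rw [Finset.sum_congr rfl fun (i : {i : Ω // π i = α}) _ => decomp α i t,
      Finset.sum_add_distrib, sumS α t]
    have colzero : ∀ j : Ω, ∑ β : X, ∑ i : {i : Ω // π i = β}, A i.1 j = 0 := by
      intro j
      rw [Fintype.sum_fiberwise π (fun i => A i j)]
      exact hcolsum j
    have h3 : ∑ i : {i : Ω // π i = α}, (blockM A π α α).mulVec (fun kk => n t kk.1) i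
        = - D α t := by
      rw [hD, Finset.sum_congr rfl fun (i : {i : Ω // π i = α})
        (_ : i ∈ (Finset.univ : Finset {i : Ω // π i = α})) => hJ α t i]
      have hstep : ∀ i : {i : Ω // π i = α},
          (blockM A π α α).mulVec (fun kk => n t kk.1) i
          = ∑ j : {j : Ω // π j = α}, A i.1 j.1 * n t j.1 := fun i => rfl
      rw [Finset.sum_congr rfl fun i _ => hstep i, Finset.sum_comm, ← Finset.sum_neg_distrib]
      refine Finset.sum_congr rfl fun j _ => ?_
      have hcol : ∑ i : {i : Ω // π i = α}, A i.1 j.1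
          = - ∑ β ∈ Finset.univ.erase α, ∑ kk : {kk : Ω // π kk = β}, A kk.1 j.1 := by
        have h0 := colzero j.1
        have h1 := Finset.add_sum_erase Finset.univ
          (fun β => ∑ i : {i : Ω // π i = β}, A i.1 j.1) (Finset.mem_univ α)
        have h2 := h1.trans h0
        linarith
      rw [← Finset.sum_mul, hcol]
      ring
    rw [h3]
    ring
  exact ⟨fun α t j hj => ⟨hS0zero α t j hj, hSzero α t j hj⟩,
    fun α t _ => hBeq α t, fun α t _ => hDeq α t, hiii⟩
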